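/- Under the δ_throttle emission model with equal prior probabilities 1/2 on the two hypotheses L_harvest and L_derate, the posterior probability of L_harvest given the event {δ_throttle < 0.15} is at least 0.85. Explicitly, writing P_h for the Gaussian measure N(0.08, 0.05²) conditioned on [0,1] and P_d for the Gaussian measure N(0.55, 0.18²) conditioned on [0,1], one has P_h([0, 0.15)) / (P_h([0, 0.15)) + P_d([0, 0.15))) ≥ 0.85. -/

import Mathlib

open MeasureTheory ProbabilityTheory Set
open scoped NNReal ENNReal
open Real

-- upper bound on exp(1/2)
lemma exp_half_ub : rexp (1/2) ≤ 1.64873 := by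
  have h2 : rexp (1/2) ^ 2 = rexp 1 := by
    rw [← Real.exp_nat_mul]; norm_num
  nlinarith [Real.exp_pos (1/2:ℝ), Real.exp_one_lt_d9]

lemma exp_neg_half_lb : ((1.64873 : ℝ))⁻¹ ≤ rexp (-(1/2)) := by
  rw [Real.exp_neg]
  exact inv_anti₀ (Real.exp_pos _) exp_half_ub

lemma exp_big : ((106:ℝ)/81)^8 ≤ rexp (200/81) := by
  have h1 : ((106:ℝ)/81) ≤ rexp (25/81) := by
    have := Real.add_one_le_exp (25/81 : ℝ); linarith
  calc ((106:ℝ)/81)^8 ≤ (rexp (25/81))^8 :=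
        pow_le_pow_left₀ (by norm_num) h1 8
    _ = rexp ((8:ℕ) * (25/81)) := (Real.exp_nat_mul _ 8).symm
    _ = rexp (200/81) := by norm_num

lemma pdf_h_lb {x : ℝ} (hx : x ∈ Icc (3/100:ℝ) (13/100)) :
    (24/5 : ℝ) ≤ gaussianPDFReal (2/25) ((1/20:ℝ≥0)^2) x := by
  obtain ⟨h1, h2⟩ := hx
  rw [gaussianPDFReal]
  have hv : ((((1/20:ℝ≥0))^2 : ℝ≥0) : ℝ) = 1/400 := by norm_num
  rw [hv]
  have hπ : π ≤ 3.141593 := Real.pi_lt_d6.le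
  have hπ0 : 0 < π := Real.pi_pos
  have hs : √(2*π*(1/400)) ≤ 0.1253333 := by
    rw [show (0.1253333:ℝ) = √(0.1253333^2) from (Real.sqrt_sq (by norm_num)).symm]
    exact Real.sqrt_le_sqrt (by nlinarith)
  have hspos : (0:ℝ) < √(2*π*(1/400)) := Real.sqrt_pos.mpr (by positivity)
  have hexp : rexp (-(1/2)) ≤ rexp (-(x - 2/25)^2 / (2*(1/400))) := by
    apply Real.exp_le_exp.mpr
    rw [show -(x - 2/25)^2 / (2*(1/400)) = -(200*(x - 2/25)^2) by ring]
    nlinarith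
  calc (24/5:ℝ) ≤ (0.1253333:ℝ)⁻¹ * (1.64873:ℝ)⁻¹ := by norm_num
    _ ≤ (√(2*π*(1/400)))⁻¹ * rexp (-(1/2)) :=
        mul_le_mul (inv_anti₀ hspos hs) exp_neg_half_lb (by positivity) (by positivity)
    _ ≤ (√(2*π*(1/400)))⁻¹ * rexp (-(x - 2/25)^2 / (2*(1/400))) :=
        mul_le_mul_of_nonneg_left hexp (by positivity)

lemma pdf_d_lb {x : ℝ} (hx : x ∈ Icc (37/100:ℝ) (73/100)) :
    (4/3 : ℝ) ≤ gaussianPDFReal (11/20) ((9/50:ℝ≥0)^2) x := by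
  obtain ⟨h1, h2⟩ := hx
  rw [gaussianPDFReal]
  have hv : ((((9/50:ℝ≥0))^2 : ℝ≥0) : ℝ) = 81/2500 := by norm_num
  rw [hv]
  have hπ : π ≤ 3.141593 := Real.pi_lt_d6.le
  have hπ0 : 0 < π := Real.pi_pos
  have hs : √(2*π*(81/2500)) ≤ 0.4511932 := by
    rw [show (0.4511932:ℝ) = √(0.4511932^2) from (Real.sqrt_sq (by norm_num)).symm]
    exact Real.sqrt_le_sqrt (by nlinarith)
  have hspos : (0:ℝ) < √(2*π*(81/2500)) := Real.sqrt_pos.mpr (by positivity)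
  have hexp : rexp (-(1/2)) ≤ rexp (-(x - 11/20)^2 / (2*(81/2500))) := by
    apply Real.exp_le_exp.mpr
    rw [show -(x - 11/20)^2 / (2*(81/2500)) = -((1250/81)*(x - 11/20)^2) by ring]
    nlinarith
  calc (4/3:ℝ) ≤ (0.4511932:ℝ)⁻¹ * (1.64873:ℝ)⁻¹ := by norm_num
    _ ≤ (√(2*π*(81/2500)))⁻¹ * rexp (-(1/2)) :=
        mul_le_mul (inv_anti₀ hspos hs) exp_neg_half_lb (by positivity) (by positivity)
    _ ≤ (√(2*π*(81/2500)))⁻¹ * rexp (-(x - 11/20)^2 / (2*(81/2500))) :=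
        mul_le_mul_of_nonneg_left hexp (by positivity)

lemma pdf_d_ub {x : ℝ} (hx : x ∈ Ico (0:ℝ) (3/20)) :
    gaussianPDFReal (11/20) ((9/50:ℝ≥0)^2) x ≤ 4/15 := by
  obtain ⟨h1, h2⟩ := hx
  have h2' : x ≤ 3/20 := h2.le
  rw [gaussianPDFReal]
  have hv : ((((9/50:ℝ≥0))^2 : ℝ≥0) : ℝ) = 81/2500 := by norm_num
  rw [hv]
  have hπ : (3.141592:ℝ) ≤ π := Real.pi_gt_d6.le
  have hπ0 : 0 < π := Real.pi_pos
  have hs : (0.45119:ℝ) ≤ √(2*π*(81/2500)) := by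
    rw [show (0.45119:ℝ) = √(0.45119^2) from (Real.sqrt_sq (by norm_num)).symm]
    exact Real.sqrt_le_sqrt (by nlinarith)
  have hexp : rexp (-(x - 11/20)^2 / (2*(81/2500))) ≤ (((106:ℝ)/81)^8)⁻¹ := by
    have h3 : rexp (-(x - 11/20)^2 / (2*(81/2500))) ≤ rexp (-(200/81)) := by
      apply Real.exp_le_exp.mpr
      rw [show -(x - 11/20)^2 / (2*(81/2500)) = -((1250/81)*(x - 11/20)^2) by ring]
      nlinarith
    refine h3.trans ?_
    rw [Real.exp_neg]
    exact inv_anti₀ (by positivity) exp_big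
  calc (√(2*π*(81/2500)))⁻¹ * rexp (-(x - 11/20)^2 / (2*(81/2500)))
      ≤ (0.45119:ℝ)⁻¹ * (((106:ℝ)/81)^8)⁻¹ :=
        mul_le_mul (inv_anti₀ (by norm_num) hs) hexp (Real.exp_nonneg _)
          (by positivity)
    _ ≤ 4/15 := by norm_num

lemma meas_h_lb :
    ENNReal.ofReal (12/25) ≤ gaussianReal (2/25) ((1/20:ℝ≥0)^2) (Ico (0:ℝ) (3/20)) := by
  have hv : ((1/20:ℝ≥0)^2) ≠ 0 := by norm_num
  rw [gaussianReal_apply _ hv]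
  calc ENNReal.ofReal (12/25)
      = ENNReal.ofReal (24/5) * volume (Icc (3/100:ℝ) (13/100)) := by
        rw [Real.volume_Icc, ← ENNReal.ofReal_mul (by norm_num)]; norm_num
    _ = ∫⁻ _ in Icc (3/100:ℝ) (13/100), ENNReal.ofReal (24/5) := (setLIntegral_const _ _).symm
    _ ≤ ∫⁻ x in Icc (3/100:ℝ) (13/100), gaussianPDF (2/25) ((1/20:ℝ≥0)^2) x :=
        setLIntegral_mono (measurable_gaussianPDF _ _)
          (fun x hx => ENNReal.ofReal_le_ofReal (pdf_h_lb hx))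
    _ ≤ ∫⁻ x in Ico (0:ℝ) (3/20), gaussianPDF (2/25) ((1/20:ℝ≥0)^2) x :=
        lintegral_mono_set (fun x hx => ⟨by linarith [hx.1], by linarith [hx.2]⟩)

lemma meas_d_lb :
    ENNReal.ofReal (12/25) ≤ gaussianReal (11/20) ((9/50:ℝ≥0)^2) (Icc (0:ℝ) 1) := by
  have hv : ((9/50:ℝ≥0)^2) ≠ 0 := by norm_num
  rw [gaussianReal_apply _ hv]
  calc ENNReal.ofReal (12/25)
      = ENNReal.ofReal (4/3) * volume (Icc (37/100:ℝ) (73/100)) := by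
        rw [Real.volume_Icc, ← ENNReal.ofReal_mul (by norm_num)]; norm_num
    _ = ∫⁻ _ in Icc (37/100:ℝ) (73/100), ENNReal.ofReal (4/3) := (setLIntegral_const _ _).symm
    _ ≤ ∫⁻ x in Icc (37/100:ℝ) (73/100), gaussianPDF (11/20) ((9/50:ℝ≥0)^2) x :=
        setLIntegral_mono (measurable_gaussianPDF _ _)
          (fun x hx => ENNReal.ofReal_le_ofReal (pdf_d_lb hx))
    _ ≤ ∫⁻ x in Icc (0:ℝ) 1, gaussianPDF (11/20) ((9/50:ℝ≥0)^2) x :=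
        lintegral_mono_set (fun x hx => ⟨by linarith [hx.1], by linarith [hx.2]⟩)

lemma meas_d_ub :
    gaussianReal (11/20) ((9/50:ℝ≥0)^2) (Ico (0:ℝ) (3/20)) ≤ ENNReal.ofReal (1/25) := by
  have hv : ((9/50:ℝ≥0)^2) ≠ 0 := by norm_num
  rw [gaussianReal_apply _ hv]
  calc ∫⁻ x in Ico (0:ℝ) (3/20), gaussianPDF (11/20) ((9/50:ℝ≥0)^2) x
      ≤ ∫⁻ _ in Ico (0:ℝ) (3/20), ENNReal.ofReal (4/15) :=
        setLIntegral_mono measurable_const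
          (fun x hx => ENNReal.ofReal_le_ofReal (pdf_d_ub hx))
    _ = ENNReal.ofReal (4/15) * volume (Ico (0:ℝ) (3/20)) := setLIntegral_const _ _
    _ = ENNReal.ofReal (1/25) := by
        rw [Real.volume_Ico, ← ENNReal.ofReal_mul (by norm_num)]; norm_num

/-- The truncated-Gaussian emission measure of `δ_throttle` under `L_harvest`:
`N(0.08, 0.05²)` conditioned on `[0,1]`. -/
noncomputable def Pharvest : Measure ℝ :=
    (gaussianReal (2/25) ((1/20 : ℝ≥0)^2))[|Icc (0:ℝ) 1]

/-- The truncated-Gaussian emission measure of `δ_throttle` under `L_derate`: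
`N(0.55, 0.18²)` conditioned on `[0,1]`. -/
noncomputable def Pderate : Measure ℝ :=
    (gaussianReal (11/20) ((9/50 : ℝ≥0)^2))[|Icc (0:ℝ) 1]

/-- With equal priors `1/2` on `L_harvest` and `L_derate`, the
posterior probability of `L_harvest` given `{δ_throttle < 0.15}` is at least
`0.85`:
`P_h([0, 0.15)) / (P_h([0, 0.15)) + P_d([0, 0.15))) ≥ 0.85`. -/
theorem posterior_harvest_given_low_throttle :
    (85 : ℝ≥0∞) / 100 ≤
      Pharvest (Ico (0:ℝ) (3/20)) /
        (Pharvest (Ico (0:ℝ) (3/20)) + Pderate (Ico (0:ℝ) (3/20))) := by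
  have hsub : Ico (0:ℝ) (3/20) ⊆ Icc 0 1 :=
    fun x hx => ⟨hx.1, hx.2.le.trans (by norm_num)⟩
  rw [Pharvest, Pderate, cond_apply measurableSet_Icc, cond_apply measurableSet_Icc,
    inter_eq_self_of_subset_right hsub]
  set μh := gaussianReal (2/25) ((1/20:ℝ≥0)^2) with hμh
  set μd := gaussianReal (11/20) ((9/50:ℝ≥0)^2) with hμd
  set x := (μh (Icc (0:ℝ) 1))⁻¹ * μh (Ico (0:ℝ) (3/20)) with hxdef
  set y := (μd (Icc (0:ℝ) 1))⁻¹ * μd (Ico (0:ℝ) (3/20)) with hydef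
  have hA1 : μh (Icc (0:ℝ) 1) ≤ 1 := prob_le_one
  have hAlb : ENNReal.ofReal (12/25) ≤ μh (Icc (0:ℝ) 1) :=
    meas_h_lb.trans (measure_mono hsub)
  have hA0 : μh (Icc (0:ℝ) 1) ≠ 0 := by
    intro h; rw [h] at hAlb; simp [ENNReal.ofReal_eq_zero] at hAlb; linarith
  have hx : ENNReal.ofReal (12/25) ≤ x := by
    calc ENNReal.ofReal (12/25) ≤ μh (Ico (0:ℝ) (3/20)) := meas_h_lb
      _ = 1 * μh (Ico (0:ℝ) (3/20)) := (one_mul _).symm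
      _ ≤ (μh (Icc (0:ℝ) 1))⁻¹ * μh (Ico (0:ℝ) (3/20)) :=
          mul_le_mul_left (ENNReal.one_le_inv.mpr hA1) _
  have hxne : x ≠ ⊤ := by
    apply ENNReal.mul_ne_top (ENNReal.inv_ne_top.mpr hA0)
    exact (lt_of_le_of_lt prob_le_one ENNReal.one_lt_top).ne
  have hx0 : x ≠ 0 := by
    intro h; rw [h] at hx; simp [ENNReal.ofReal_eq_zero] at hx; linarith
  have hy : y ≤ ENNReal.ofReal (1/12) := by
    calc y ≤ (ENNReal.ofReal (12/25))⁻¹ * ENNReal.ofReal (1/25) :=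
          mul_le_mul' (ENNReal.inv_le_inv' meas_d_lb) meas_d_ub
      _ = ENNReal.ofReal (1/12) := by
          rw [← ENNReal.ofReal_inv_of_pos (by norm_num),
            ← ENNReal.ofReal_mul (by norm_num)]
          norm_num
  rw [ENNReal.le_div_iff_mul_le (Or.inl (by simp [hx0])) (Or.inr hxne)]
  have h85 : (85:ℝ≥0∞)/100 = ENNReal.ofReal (85/100) := by
    rw [ENNReal.ofReal_div_of_pos (by norm_num)]
    norm_num
  have h15 : (15:ℝ≥0∞)/100 = ENNReal.ofReal (15/100) := by
    rw [ENNReal.ofReal_div_of_pos (by norm_num)]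
    norm_num
  have hkey : (85:ℝ≥0∞)/100 * y ≤ (15:ℝ≥0∞)/100 * x := by
    calc (85:ℝ≥0∞)/100 * y ≤ ENNReal.ofReal (85/100) * ENNReal.ofReal (1/12) := by
          rw [h85]; exact mul_le_mul_right hy _
      _ ≤ ENNReal.ofReal (15/100) * ENNReal.ofReal (12/25) := by
          rw [← ENNReal.ofReal_mul (by norm_num), ← ENNReal.ofReal_mul (by norm_num)]
          exact ENNReal.ofReal_le_ofReal (by norm_num)
      _ ≤ (15:ℝ≥0∞)/100 * x := by rw [h15]; exact mul_le_mul_right hx _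
  calc (85:ℝ≥0∞)/100 * (x + y) = 85/100 * x + 85/100 * y := mul_add _ _ _
    _ ≤ 85/100 * x + 15/100 * x := add_le_add_right hkey _
    _ = (85/100 + 15/100) * x := (add_mul _ _ _).symm
    _ = x := by
        rw [ENNReal.div_add_div_same]
        norm_num
        rw [ENNReal.div_self (by norm_num) (by norm_num), one_mul]
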